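/- arXiv:1910.14147 — 5 statements merged into one kernel-verified Lean document; each statement's English description precedes it below -/
import Mathlib

section
/- Let z* ∈ ℝⁿ with ‖z*‖₂ ≤ 1. Then z* is a global minimizer of f(z) = (1/2)·zᵀHz + gᵀz over the closed unit ball {z : ‖z‖₂ ≤ 1} if and only if there exists λ ≥ 0 such that (H + λI)z* + g = 0, λ·(1 − ‖z*‖₂) = 0, and H + λI is positive semidefinite. -/
open Matrix

/-- The Euclidean (`ℓ₂`) norm of a vector in `ℝⁿ`. -/
noncomputable def l2norm {n : ℕ} (x : Fin n → ℝ) : ℝ := Real.sqrt (∑ i, x i ^ 2)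

/-- The trust-region objective `f(z) = (1/2) zᵀ H z + gᵀ z`. -/
noncomputable def quadObj {n : ℕ} (H : Matrix (Fin n) (Fin n) ℝ) (g z : Fin n → ℝ) : ℝ :=
  (1 / 2) * (z ⬝ᵥ H.mulVec z) + g ⬝ᵥ z

section aux

variable {n : ℕ}

lemma dot_self_nonneg' (x : Fin n → ℝ) : 0 ≤ x ⬝ᵥ x :=
  Finset.sum_nonneg fun _ _ => mul_self_nonneg _

lemma l2norm_le_one_iff (x : Fin n → ℝ) : l2norm x ≤ 1 ↔ x ⬝ᵥ x ≤ 1 := by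
  unfold l2norm; rw [Real.sqrt_le_one]; simp [dotProduct, sq]

lemma l2norm_eq_one_iff (x : Fin n → ℝ) : l2norm x = 1 ↔ x ⬝ᵥ x = 1 := by
  unfold l2norm; rw [Real.sqrt_eq_one]; simp [dotProduct, sq]

lemma dotH_symm {H : Matrix (Fin n) (Fin n) ℝ} (hH : H.IsSymm) (x y : Fin n → ℝ) :
    x ⬝ᵥ H.mulVec y = y ⬝ᵥ H.mulVec x := by
  nth_rewrite 1 [← hH]
  rw [dotProduct_mulVec, vecMul_transpose, dotProduct_comm]

/-- If `a + b t + c t²` is nonnegative for all small positive `t`, then `a` is nonnegative. -/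
lemma helperA (a b c δ : ℝ) (hδ : 0 < δ)
    (h : ∀ t : ℝ, 0 < t → t ≤ δ → 0 ≤ a + b * t + c * t ^ 2) : 0 ≤ a := by
  by_contra ha
  push_neg at ha
  have hden : (0:ℝ) < 2 * (|b| + |c| + 1) := by positivity
  set t : ℝ := min (min δ 1) (-a / (2 * (|b| + |c| + 1))) with ht
  have ht0 : 0 < t := lt_min (lt_min hδ one_pos) (div_pos (by linarith) hden)
  have ht1 : t ≤ 1 := le_trans (min_le_left _ _) (min_le_right _ _)
  have htδ : t ≤ δ := le_trans (min_le_left _ _) (min_le_left _ _)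
  have hta : t ≤ -a / (2 * (|b| + |c| + 1)) := min_le_right _ _
  have h1 := h t ht0 htδ
  have hb : b * t ≤ |b| * t := by
    have := le_abs_self b
    nlinarith
  have hc : c * t ^ 2 ≤ |c| * t := by
    have h2 : c * t ^ 2 ≤ |c| * t ^ 2 := by nlinarith [le_abs_self c, sq_nonneg t]
    have h3 : |c| * t ^ 2 ≤ |c| * t := by
      nlinarith [mul_nonneg (abs_nonneg c) (mul_nonneg ht0.le (sub_nonneg.2 ht1))]
    linarith
  have key : (|b| + |c|) * t ≤ -a / 2 := by
    rw [le_div_iff₀ hden] at hta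
    have habs : 0 ≤ |b| + |c| := by positivity
    nlinarith
  linarith

/-- If `a t + b t²` is nonnegative for all `t` of small absolute value, then `a = 0`. -/
lemma helperB (a b δ : ℝ) (hδ : 0 < δ)
    (h : ∀ t : ℝ, |t| ≤ δ → 0 ≤ a * t + b * t ^ 2) : a = 0 := by
  have h1 : 0 ≤ a := by
    refine helperA a b 0 δ hδ fun t ht0 htδ => ?_
    have h2 := h t (by rw [abs_of_pos ht0]; exact htδ)
    have h3 : 0 ≤ (a * t + b * t ^ 2) / t := div_nonneg h2 ht0.le
    rw [show (a * t + b * t ^ 2) / t = a + b * t by field_simp] at h3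
    linarith
  have h2 : 0 ≤ -a := by
    refine helperA (-a) b 0 δ hδ fun t ht0 htδ => ?_
    have h2 := h (-t) (by rw [abs_neg, abs_of_pos ht0]; exact htδ)
    have h3 : 0 ≤ (-a) * t + b * t ^ 2 := by nlinarith
    have h4 : 0 ≤ ((-a) * t + b * t ^ 2) / t := div_nonneg h3 ht0.le
    rw [show ((-a) * t + b * t ^ 2) / t = -a + b * t by field_simp] at h4
    linarith
  linarith

lemma quad_expand {H : Matrix (Fin n) (Fin n) ℝ} (hH : H.IsSymm) (g x d : Fin n → ℝ)
    (t : ℝ) : quadObj H g (x + t • d) =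
      quadObj H g x + t * (d ⬝ᵥ (H.mulVec x + g)) + t ^ 2 * ((1/2) * (d ⬝ᵥ H.mulVec d)) := by
  unfold quadObj
  simp only [Matrix.mulVec_add, Matrix.mulVec_smul, dotProduct_add, add_dotProduct,
    dotProduct_smul, smul_dotProduct, smul_eq_mul]
  rw [dotH_symm hH x d, dotProduct_comm g d]
  ring

lemma key_identity {H : Matrix (Fin n) (Fin n) ℝ} (hH : H.IsSymm) (g zs : Fin n → ℝ)
    (lam : ℝ) (hA : (H + lam • (1 : Matrix (Fin n) (Fin n) ℝ)).mulVec zs + g = 0)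
    (z : Fin n → ℝ) :
    quadObj H g z = quadObj H g zs
      + (1/2) * ((z - zs) ⬝ᵥ (H + lam • (1 : Matrix (Fin n) (Fin n) ℝ)).mulVec (z - zs))
      + (lam / 2) * (zs ⬝ᵥ zs - z ⬝ᵥ z) := by
  have hg : g = -(H.mulVec zs + lam • zs) := by
    rw [Matrix.add_mulVec, Matrix.smul_mulVec, Matrix.one_mulVec] at hA
    linear_combination (norm := module) hA
  subst hg
  unfold quadObj
  simp only [Matrix.add_mulVec, Matrix.smul_mulVec, Matrix.one_mulVec,
    Matrix.mulVec_sub, dotProduct_add, add_dotProduct, dotProduct_sub, sub_dotProduct,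
    dotProduct_smul, smul_dotProduct, smul_eq_mul, neg_dotProduct, dotProduct_neg]
  rw [dotH_symm hH z zs, dotProduct_comm z zs, dotProduct_comm (H.mulVec zs) z,
    dotProduct_comm (H.mulVec zs) zs, dotH_symm hH zs z]
  ring

lemma dot_expand (x d : Fin n → ℝ) (t : ℝ) :
    (x + t • d) ⬝ᵥ (x + t • d) = x ⬝ᵥ x + 2 * t * (x ⬝ᵥ d) + t ^ 2 * (d ⬝ᵥ d) := by
  simp only [dotProduct_add, add_dotProduct, dotProduct_smul, smul_dotProduct, smul_eq_mul]
  rw [dotProduct_comm d x]; ring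

lemma bound_step (P X Y Z Nu uP t c : ℝ) (hNu : 0 ≤ Nu) (ht1 : |t| ≤ 1)
    (hc1 : c ≤ 1) (he : 1 - c ≤ t ^ 2 * Nu)
    (hmain : 0 ≤ (c - 1) * P + t * uP
      + (1/2) * ((c - 1) ^ 2 * X + 2 * (c - 1) * t * Y + t ^ 2 * Z)) :
    0 ≤ uP * t + (Nu * |P| + (1/2) * Nu ^ 2 * |X| + Nu * |Y| + (1/2) * |Z|) * t ^ 2 := by
  have ht2 : t ^ 2 ≤ |t| := by nlinarith [sq_abs t, abs_nonneg t]
  have he0 : 0 ≤ 1 - c := by linarith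
  have hP1 : (c - 1) * P ≤ t ^ 2 * Nu * |P| := by
    have b1 : (c - 1) * P ≤ (1 - c) * |P| := by nlinarith [neg_abs_le P, abs_nonneg P]
    have b2 : (1 - c) * |P| ≤ t ^ 2 * Nu * |P| := mul_le_mul_of_nonneg_right he (abs_nonneg P)
    linarith
  have hX1 : (1/2) * ((c - 1) ^ 2 * X) ≤ (1/2) * (t ^ 2 * Nu ^ 2) * |X| := by
    have b1 : (c - 1) ^ 2 ≤ (t ^ 2 * Nu) ^ 2 := by nlinarith
    have ht3 : t ^ 2 ≤ 1 := by nlinarith [sq_abs t, abs_nonneg t]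
    have b2 : (t ^ 2 * Nu) ^ 2 ≤ t ^ 2 * Nu ^ 2 := by
      nlinarith [mul_nonneg (mul_nonneg (sq_nonneg t) (sq_nonneg Nu)) (sub_nonneg.2 ht3)]
    nlinarith [le_abs_self X, abs_nonneg X, sq_nonneg (c - 1)]
  have hY1 : (1/2) * (2 * (c - 1) * t * Y) ≤ t ^ 2 * Nu * |Y| := by
    have b1 : (c - 1) * t * Y ≤ (1 - c) * |t| * |Y| := by
      have h := le_abs_self ((c - 1) * t * Y)
      rw [abs_mul, abs_mul, abs_of_nonpos (by linarith : c - 1 ≤ 0)] at h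
      nlinarith
    have b3 : (1 - c) * |t| ≤ t ^ 2 * Nu := by
      nlinarith [mul_le_mul_of_nonneg_right he (abs_nonneg t), abs_nonneg t,
        mul_nonneg (mul_nonneg (sq_nonneg t) hNu) (sub_nonneg.2 ht1)]
    nlinarith [abs_nonneg Y, mul_le_mul_of_nonneg_right b3 (abs_nonneg Y)]
  have hZ1 : (1/2) * (t ^ 2 * Z) ≤ (1/2) * t ^ 2 * |Z| := by
    nlinarith [le_abs_self Z, sq_nonneg t]
  linarith [hmain, hP1, hX1, hY1, hZ1]

/-- Interior case: derivative vanishes and curvature is nonnegative in every direction. -/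
lemma interior_dir {H : Matrix (Fin n) (Fin n) ℝ} (hH : H.IsSymm) {g zs : Fin n → ℝ}
    (hmin : ∀ z : Fin n → ℝ, l2norm z ≤ 1 → quadObj H g zs ≤ quadObj H g z)
    (hlt : zs ⬝ᵥ zs < 1) (d : Fin n → ℝ) :
    d ⬝ᵥ (H.mulVec zs + g) = 0 ∧ 0 ≤ d ⬝ᵥ H.mulVec d := by
  set M : ℝ := 2 * |zs ⬝ᵥ d| + d ⬝ᵥ d + 1 with hM
  have hM0 : 0 < M := by
    have := dot_self_nonneg' d
    have := abs_nonneg (zs ⬝ᵥ d)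
    simp only [hM]; linarith
  set δ : ℝ := min 1 ((1 - zs ⬝ᵥ zs) / M) with hδdef
  have hδ : 0 < δ := lt_min one_pos (div_pos (by linarith) hM0)
  have hδ1 : δ ≤ 1 := min_le_left _ _
  have feas : ∀ t : ℝ, |t| ≤ δ → l2norm (zs + t • d) ≤ 1 := by
    intro t ht
    rw [l2norm_le_one_iff, dot_expand]
    have ht1 : |t| ≤ 1 := le_trans ht hδ1
    have ht2 : |t| * M ≤ 1 - zs ⬝ᵥ zs := by
      have h5 : |t| ≤ (1 - zs ⬝ᵥ zs) / M := le_trans ht (min_le_right _ _)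
      rw [le_div_iff₀ hM0] at h5; exact h5
    have h6 : 2 * t * (zs ⬝ᵥ d) ≤ 2 * |t| * |zs ⬝ᵥ d| := by
      nlinarith [abs_mul t (zs ⬝ᵥ d), le_abs_self (t * (zs ⬝ᵥ d)), abs_nonneg t,
        abs_nonneg (zs ⬝ᵥ d)]
    have h7 : t ^ 2 * (d ⬝ᵥ d) ≤ |t| * (d ⬝ᵥ d) := by
      have h8 : t ^ 2 ≤ |t| := by nlinarith [sq_abs t, abs_nonneg t]
      exact mul_le_mul_of_nonneg_right h8 (dot_self_nonneg' d)
    have h9 : |t| * M = 2 * |t| * |zs ⬝ᵥ d| + |t| * (d ⬝ᵥ d) + |t| := by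
      simp only [hM]; ring
    have := abs_nonneg t
    linarith
  have key : ∀ t : ℝ, |t| ≤ δ →
      0 ≤ (d ⬝ᵥ (H.mulVec zs + g)) * t + ((1/2) * (d ⬝ᵥ H.mulVec d)) * t ^ 2 := by
    intro t ht
    have h1 := hmin (zs + t • d) (feas t ht)
    rw [quad_expand hH] at h1
    linarith
  have ha : d ⬝ᵥ (H.mulVec zs + g) = 0 := helperB _ _ δ hδ key
  refine ⟨ha, ?_⟩
  have h2 := key δ (by rw [abs_of_pos hδ])
  rw [ha] at h2
  nlinarith [hδ, mul_pos hδ hδ]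

/-- Boundary case: the gradient is orthogonal to every direction tangent to the sphere. -/
lemma boundary_orth {H : Matrix (Fin n) (Fin n) ℝ} (hH : H.IsSymm) {g zs : Fin n → ℝ}
    (hmin : ∀ z : Fin n → ℝ, l2norm z ≤ 1 → quadObj H g zs ≤ quadObj H g z)
    (hb : zs ⬝ᵥ zs = 1) (u : Fin n → ℝ) (hu : zs ⬝ᵥ u = 0) :
    u ⬝ᵥ (H.mulVec zs + g) = 0 := by
  have hNu : (0:ℝ) ≤ u ⬝ᵥ u := dot_self_nonneg' u
  have hNu1 : (0:ℝ) < u ⬝ᵥ u + 1 := by linarith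
  refine helperB _ ((u ⬝ᵥ u) * |zs ⬝ᵥ (H.mulVec zs + g)| + (1/2) * (u ⬝ᵥ u) ^ 2 * |zs ⬝ᵥ H.mulVec zs|
      + (u ⬝ᵥ u) * |zs ⬝ᵥ H.mulVec u| + (1/2) * |u ⬝ᵥ H.mulVec u|)
    (1 / (u ⬝ᵥ u + 1)) (by positivity) ?_
  intro t ht
  have hδ1 : 1 / (u ⬝ᵥ u + 1) ≤ 1 := by rw [div_le_one hNu1]; linarith
  have ht1 : |t| ≤ 1 := le_trans ht hδ1
  have htsq : t ^ 2 ≤ (1 / (u ⬝ᵥ u + 1)) ^ 2 := by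
    rw [← sq_abs t]; exact pow_le_pow_left₀ (abs_nonneg t) ht 2
  have hs : 0 < 1 - t ^ 2 * (u ⬝ᵥ u) := by
    have hδ2 : (1 / (u ⬝ᵥ u + 1)) ^ 2 * (u ⬝ᵥ u + 1) ^ 2 = 1 := by field_simp
    nlinarith [mul_le_mul_of_nonneg_right htsq hNu, sq_nonneg (u ⬝ᵥ u)]
  set c : ℝ := Real.sqrt (1 - t ^ 2 * (u ⬝ᵥ u)) with hcdef
  have hc0 : 0 < c := Real.sqrt_pos.mpr hs
  have hc2 : c ^ 2 = 1 - t ^ 2 * (u ⬝ᵥ u) := Real.sq_sqrt hs.le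
  have hc1 : c ≤ 1 := by nlinarith [mul_nonneg (sq_nonneg t) hNu]
  have he : 1 - c ≤ t ^ 2 * (u ⬝ᵥ u) := by nlinarith
  have hzeq : zs + (1:ℝ) • ((c - 1) • zs + t • u) = c • zs + t • u := by module
  have feas : l2norm (zs + (1:ℝ) • ((c - 1) • zs + t • u)) ≤ 1 := by
    rw [hzeq, l2norm_le_one_iff]
    have hexp : (c • zs + t • u) ⬝ᵥ (c • zs + t • u)
        = c ^ 2 * (zs ⬝ᵥ zs) + 2 * c * t * (zs ⬝ᵥ u) + t ^ 2 * (u ⬝ᵥ u) := by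
      simp only [dotProduct_add, add_dotProduct, dotProduct_smul, smul_dotProduct, smul_eq_mul]
      rw [dotProduct_comm u zs]; ring
    rw [hexp, hb, hu, hc2]; linarith
  have h1 := hmin _ feas
  rw [quad_expand hH] at h1
  have e1 : ((c - 1) • zs + t • u) ⬝ᵥ (H.mulVec zs + g)
      = (c - 1) * (zs ⬝ᵥ (H.mulVec zs + g)) + t * (u ⬝ᵥ (H.mulVec zs + g)) := by
    simp only [add_dotProduct, smul_dotProduct, smul_eq_mul]
  have e2 : ((c - 1) • zs + t • u) ⬝ᵥ H.mulVec ((c - 1) • zs + t • u)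
      = (c - 1) ^ 2 * (zs ⬝ᵥ H.mulVec zs) + 2 * (c - 1) * t * (zs ⬝ᵥ H.mulVec u)
        + t ^ 2 * (u ⬝ᵥ H.mulVec u) := by
    simp only [Matrix.mulVec_add, Matrix.mulVec_smul, dotProduct_add, add_dotProduct,
      dotProduct_smul, smul_dotProduct, smul_eq_mul]
    rw [dotH_symm hH u zs]; ring
  rw [e1, e2] at h1
  exact bound_step (zs ⬝ᵥ (H.mulVec zs + g)) (zs ⬝ᵥ H.mulVec zs) (zs ⬝ᵥ H.mulVec u)
    (u ⬝ᵥ H.mulVec u) (u ⬝ᵥ u) (u ⬝ᵥ (H.mulVec zs + g)) t c hNu ht1 hc1 he (by linarith)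

/-- On the boundary, the multiplier is nonnegative. -/
lemma boundary_lam_nonneg {H : Matrix (Fin n) (Fin n) ℝ} (hH : H.IsSymm) {g zs : Fin n → ℝ}
    (hmin : ∀ z : Fin n → ℝ, l2norm z ≤ 1 → quadObj H g zs ≤ quadObj H g z)
    (hb : zs ⬝ᵥ zs = 1) : 0 ≤ -(zs ⬝ᵥ (H.mulVec zs + g)) := by
  refine helperA _ ((1/2) * (zs ⬝ᵥ H.mulVec zs)) 0 1 one_pos fun t ht0 ht1 => ?_
  have feas : l2norm (zs + t • (-zs)) ≤ 1 := by
    rw [l2norm_le_one_iff, dot_expand]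
    have h1 : zs ⬝ᵥ (-zs) = -(zs ⬝ᵥ zs) := by simp
    have h2 : (-zs) ⬝ᵥ (-zs) = zs ⬝ᵥ zs := by simp
    rw [h1, h2, hb]; nlinarith
  have h1 := hmin _ feas
  rw [quad_expand hH] at h1
  have e1 : (-zs) ⬝ᵥ (H.mulVec zs + g) = -(zs ⬝ᵥ (H.mulVec zs + g)) := by
    rw [neg_dotProduct]
  have e2 : (-zs) ⬝ᵥ H.mulVec (-zs) = zs ⬝ᵥ H.mulVec zs := by
    rw [Matrix.mulVec_neg]; simp
  rw [e1, e2] at h1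
  have h3 : 0 ≤ -(zs ⬝ᵥ (H.mulVec zs + g)) * t + ((1/2) * (zs ⬝ᵥ H.mulVec zs)) * t ^ 2 := by
    linarith
  have h4 : 0 ≤ (-(zs ⬝ᵥ (H.mulVec zs + g)) * t + ((1/2) * (zs ⬝ᵥ H.mulVec zs)) * t ^ 2) / t :=
    div_nonneg h3 ht0.le
  rw [show (-(zs ⬝ᵥ (H.mulVec zs + g)) * t + ((1/2) * (zs ⬝ᵥ H.mulVec zs)) * t ^ 2) / t
      = -(zs ⬝ᵥ (H.mulVec zs + g)) + ((1/2) * (zs ⬝ᵥ H.mulVec zs)) * t by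
    field_simp] at h4
  linarith

end aux

section aux2

variable {n : ℕ}

/-- On the boundary, with stationarity, the quadratic form of `H + λI` is nonnegative in any
direction not orthogonal to `zs`. -/
lemma boundary_psd_dir {H : Matrix (Fin n) (Fin n) ℝ} (hH : H.IsSymm) {g zs : Fin n → ℝ}
    (hmin : ∀ z : Fin n → ℝ, l2norm z ≤ 1 → quadObj H g zs ≤ quadObj H g z)
    (hb : zs ⬝ᵥ zs = 1) (lam : ℝ)
    (hstat : (H + lam • (1 : Matrix (Fin n) (Fin n) ℝ)).mulVec zs + g = 0)
    (u : Fin n → ℝ) (hsu : zs ⬝ᵥ u ≠ 0) :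
    0 ≤ u ⬝ᵥ (H + lam • (1 : Matrix (Fin n) (Fin n) ℝ)).mulVec u := by
  have hNu0 : 0 < u ⬝ᵥ u := by
    rcases (dot_self_nonneg' u).lt_or_eq with h | h
    · exact h
    · exact absurd (by rw [dotProduct_self_eq_zero.mp h.symm, dotProduct_zero]) hsu
  set r : ℝ := 2 * (zs ⬝ᵥ u) / (u ⬝ᵥ u) with hr
  have hrne : r ≠ 0 := div_ne_zero (by simpa using hsu) hNu0.ne'
  have hfeaseq : (zs + (-r) • u) ⬝ᵥ (zs + (-r) • u) = 1 := by
    rw [dot_expand, hb, hr]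
    field_simp
    ring
  have feas : l2norm (zs + (-r) • u) ≤ 1 := by rw [l2norm_le_one_iff, hfeaseq]
  have h1 := hmin _ feas
  have hid := key_identity hH g zs lam hstat (zs + (-r) • u)
  have hsub : (zs + (-r) • u) - zs = (-r) • u := by module
  rw [hsub, hfeaseq, hb] at hid
  rw [hid] at h1
  have e3 : ((-r) • u) ⬝ᵥ (H + lam • (1 : Matrix (Fin n) (Fin n) ℝ)).mulVec ((-r) • u)
      = r ^ 2 * (u ⬝ᵥ (H + lam • (1 : Matrix (Fin n) (Fin n) ℝ)).mulVec u) := by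
    simp only [Matrix.mulVec_smul, dotProduct_smul, smul_dotProduct, smul_eq_mul]
    ring
  rw [e3] at h1
  have hr2 : 0 < r ^ 2 := by positivity
  nlinarith [h1]

end aux2

/-- Global optimality over the closed unit ball is equivalent to the KKT conditions:
`(H + λI) z* + g = 0`, `λ (1 − ‖z*‖) = 0`, and `H + λI ⪰ 0` for some `λ ≥ 0`. -/
theorem trust_region_global_opt_iff_KKT {n : ℕ}
    (H : Matrix (Fin n) (Fin n) ℝ) (hH : H.IsSymm) (g : Fin n → ℝ)
    (zs : Fin n → ℝ) (hzs : l2norm zs ≤ 1) :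
    (∀ z : Fin n → ℝ, l2norm z ≤ 1 → quadObj H g zs ≤ quadObj H g z) ↔
      (∃ lam : ℝ, 0 ≤ lam ∧
        (H + lam • (1 : Matrix (Fin n) (Fin n) ℝ)).mulVec zs + g = 0 ∧
        lam * (1 - l2norm zs) = 0 ∧
        (H + lam • (1 : Matrix (Fin n) (Fin n) ℝ)).PosSemidef) := by
  constructor
  · intro hmin
    rw [l2norm_le_one_iff] at hzs
    rcases lt_or_eq_of_le hzs with hlt | hb
    · -- interior case: lam = 0
      have hp : H.mulVec zs + g = 0 :=
        dotProduct_self_eq_zero.mp (interior_dir hH hmin hlt (H.mulVec zs + g)).1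
      refine ⟨0, le_refl 0, ?_, by ring, ?_⟩
      · rw [zero_smul, add_zero]; exact hp
      · rw [zero_smul, add_zero]
        exact posSemidef_iff_dotProduct_mulVec.mpr ⟨hH, fun x => by rw [star_trivial]; exact (interior_dir hH hmin hlt x).2⟩
    · -- boundary case
      have hlamnn := boundary_lam_nonneg hH hmin hb
      set lam : ℝ := -(zs ⬝ᵥ (H.mulVec zs + g)) with hlamdef
      have hw0 : zs ⬝ᵥ ((H.mulVec zs + g) + lam • zs) = 0 := by
        rw [dotProduct_add, dotProduct_smul, smul_eq_mul, hb, hlamdef]; ring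
      have horth := boundary_orth hH hmin hb _ hw0
      have hzw : ((H.mulVec zs + g) + lam • zs) ⬝ᵥ zs = 0 := by
        rw [dotProduct_comm]; exact hw0
      have hww : ((H.mulVec zs + g) + lam • zs) ⬝ᵥ ((H.mulVec zs + g) + lam • zs) = 0 := by
        rw [dotProduct_add, horth, dotProduct_smul, smul_eq_mul, hzw]; ring
      have hw : (H.mulVec zs + g) + lam • zs = 0 := dotProduct_self_eq_zero.mp hww
      have hstat : (H + lam • (1 : Matrix (Fin n) (Fin n) ℝ)).mulVec zs + g = 0 := by
        rw [Matrix.add_mulVec, Matrix.smul_mulVec, Matrix.one_mulVec]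
        linear_combination (norm := module) hw
      refine ⟨lam, hlamnn, hstat, ?_, ?_⟩
      · rw [(l2norm_eq_one_iff zs).mpr hb]; ring
      · have hAsymm : (H + lam • (1 : Matrix (Fin n) (Fin n) ℝ)).IsSymm := by
          rw [Matrix.IsSymm, Matrix.transpose_add, Matrix.transpose_smul,
            Matrix.transpose_one, hH]
        refine posSemidef_iff_dotProduct_mulVec.mpr ⟨hAsymm, fun x => ?_⟩
        rw [star_trivial]
        by_cases hsu : zs ⬝ᵥ x = 0
        · refine helperA _ (2 * (zs ⬝ᵥ (H + lam • (1 : Matrix (Fin n) (Fin n) ℝ)).mulVec x))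
            (zs ⬝ᵥ (H + lam • (1 : Matrix (Fin n) (Fin n) ℝ)).mulVec zs) 1 one_pos
            fun ε hε0 hε1 => ?_
          have hne : zs ⬝ᵥ (x + ε • zs) ≠ 0 := by
            rw [dotProduct_add, dotProduct_smul, smul_eq_mul, hsu, hb]
            simpa using hε0.ne'
          have h4 := boundary_psd_dir hH hmin hb lam hstat _ hne
          have e4 : (x + ε • zs) ⬝ᵥ (H + lam • (1 : Matrix (Fin n) (Fin n) ℝ)).mulVec (x + ε • zs)
              = x ⬝ᵥ (H + lam • (1 : Matrix (Fin n) (Fin n) ℝ)).mulVec x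
                + 2 * (zs ⬝ᵥ (H + lam • (1 : Matrix (Fin n) (Fin n) ℝ)).mulVec x) * ε
                + (zs ⬝ᵥ (H + lam • (1 : Matrix (Fin n) (Fin n) ℝ)).mulVec zs) * ε ^ 2 := by
            simp only [Matrix.mulVec_add, Matrix.mulVec_smul, dotProduct_add, add_dotProduct,
              dotProduct_smul, smul_dotProduct, smul_eq_mul]
            rw [dotH_symm hAsymm x zs]; ring
          rw [e4] at h4
          linarith
        · exact boundary_psd_dir hH hmin hb lam hstat x hsu
  · rintro ⟨lam, hlam, hstat, hcomp, hpsd⟩ z hz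
    rw [l2norm_le_one_iff] at hz
    have hid := key_identity hH g zs lam hstat z
    have hquad : 0 ≤ (z - zs) ⬝ᵥ (H + lam • (1 : Matrix (Fin n) (Fin n) ℝ)).mulVec (z - zs) := by
      simpa using hpsd.dotProduct_mulVec_nonneg (z - zs)
    rcases mul_eq_zero.mp hcomp with h0 | h1
    · rw [hid, h0]
      rw [h0] at hquad
      linarith
    · have hb1 : zs ⬝ᵥ zs = 1 := (l2norm_eq_one_iff zs).mp (by linarith)
      rw [hid, hb1]
      nlinarith [mul_nonneg hlam (sub_nonneg.2 hz)]
end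

section
/- Assume λ₁ < 0 and gᵀv₁ ≠ 0. Let s ∈ ℝⁿ with ‖s‖₂ ≤ 1 be a stationary point of the trust-region problem, i.e. there exists λ ≥ 0 with (H + λI)s + g = 0 and λ·(1 − ‖s‖₂) = 0. If additionally (sᵀv₁)·(gᵀv₁) ≤ 0, then s is a global minimizer of f over the closed unit ball. -/
open Matrix

/-- The Euclidean (`ℓ₂`) norm of a vector in `ℝⁿ`. -/
noncomputable def enorm {n : ℕ} (x : Fin n → ℝ) : ℝ := Real.sqrt (∑ i, x i ^ 2)

lemma enorm_sq_eq {n : ℕ} (x : Fin n → ℝ) : _root_.enorm x ^ 2 = x ⬝ᵥ x := by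
  rw [_root_.enorm, Real.sq_sqrt (by positivity)]
  simp [dotProduct, sq]

lemma enorm_nonneg' {n : ℕ} (x : Fin n → ℝ) : 0 ≤ _root_.enorm x := Real.sqrt_nonneg _

lemma dot_symm_swap {n : ℕ} (H : Matrix (Fin n) (Fin n) ℝ) (hH : H.IsSymm)
    (x y : Fin n → ℝ) : x ⬝ᵥ H.mulVec y = (H.mulVec x) ⬝ᵥ y := by
  rw [Matrix.dotProduct_mulVec, ← Matrix.mulVec_transpose, hH.eq]

/-- Rayleigh lower bound from minimality over eigenvectors, via the spectral theorem. -/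
lemma rayleigh_lower {n : ℕ} (H : Matrix (Fin n) (Fin n) ℝ) (hH : H.IsSymm)
    (lam1 : ℝ) (hmin : ∀ (μ : ℝ) (w : Fin n → ℝ), w ≠ 0 → H.mulVec w = μ • w → lam1 ≤ μ)
    (w : Fin n → ℝ) : lam1 * (w ⬝ᵥ w) ≤ w ⬝ᵥ H.mulVec w := by
  have hHer : H.IsHermitian := by
    ext i j
    rw [Matrix.conjTranspose_apply, star_trivial, hH.apply]
  set b := hHer.eigenvectorBasis with hb
  have hW : ∀ x y : EuclideanSpace ℝ (Fin n), (inner ℝ x y : ℝ) = (x : Fin n → ℝ) ⬝ᵥ y := by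
    intro x y
    simp [PiLp.inner_apply, dotProduct, mul_comm]
  set W : EuclideanSpace ℝ (Fin n) := WithLp.toLp 2 w with hWdef
  set Hw : EuclideanSpace ℝ (Fin n) := WithLp.toLp 2 (H.mulVec w) with hHwdef
  have key1 : ∑ i, (inner ℝ W (b i) : ℝ) * inner ℝ (b i) Hw = w ⬝ᵥ H.mulVec w := by
    rw [b.sum_inner_mul_inner W Hw, hW]
  have key2 : ∑ i, (inner ℝ W (b i) : ℝ) * inner ℝ (b i) W = w ⬝ᵥ w := by
    rw [b.sum_inner_mul_inner W W, hW]
  have hterm : ∀ i, (inner ℝ (b i) Hw : ℝ) = hHer.eigenvalues i * inner ℝ (b i) W := by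
    intro i
    rw [hW, hW]
    have h0 : (b i : Fin n → ℝ) ⬝ᵥ H.mulVec w = (H.mulVec (b i)) ⬝ᵥ w :=
      dot_symm_swap H hH _ _
    have hmv : ∀ j, (H.mulVec (b i)) j = hHer.eigenvalues i * (b i : Fin n → ℝ) j := by
      intro j
      have := congrFun (hHer.mulVec_eigenvectorBasis i) j
      simpa using this
    rw [h0]
    simp only [dotProduct]
    rw [Finset.mul_sum]
    refine Finset.sum_congr rfl fun j _ => ?_
    rw [hmv j]
    ring
  have heig : ∀ i, lam1 ≤ hHer.eigenvalues i := by
    intro i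
    refine hmin _ (b i) ?_ (hHer.mulVec_eigenvectorBasis i)
    have := b.orthonormal.1 i
    intro h0
    rw [show (b i : EuclideanSpace ℝ (Fin n)) = 0 from WithLp.ofLp_injective 2 (funext fun j => congrFun h0 j)] at this
    simp at this
  calc lam1 * (w ⬝ᵥ w) = ∑ i, lam1 * ((inner ℝ W (b i) : ℝ) * inner ℝ (b i) W) := by
        rw [← Finset.mul_sum, key2]
    _ ≤ ∑ i, hHer.eigenvalues i * ((inner ℝ W (b i) : ℝ) * inner ℝ (b i) W) := by
        apply Finset.sum_le_sum
        intro i _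
        have hsq : 0 ≤ (inner ℝ W (b i) : ℝ) * inner ℝ (b i) W := by
          rw [real_inner_comm (b i) W]; exact mul_self_nonneg _
        exact mul_le_mul_of_nonneg_right (heig i) hsq
    _ = w ⬝ᵥ H.mulVec w := by
        rw [← key1]
        congr 1
        ext i
        rw [hterm i]
        ring

/-- In the easy case (`λ₁ < 0`, `gᵀv₁ ≠ 0`), any stationary point `s` of the trust-region
problem with `(sᵀv₁)(gᵀv₁) ≤ 0` is a global minimizer over the closed unit ball. -/
theorem trust_region_stationary_nonpos_corr_is_global_min {n : ℕ}
    (H : Matrix (Fin n) (Fin n) ℝ) (hH : H.IsSymm) (g : Fin n → ℝ)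
    (lam1 : ℝ) (v1 : Fin n → ℝ)
    (hv1_unit : _root_.enorm v1 = 1) (hv1_eig : H.mulVec v1 = lam1 • v1)
    (hlam1_min : ∀ (μ : ℝ) (w : Fin n → ℝ), w ≠ 0 → H.mulVec w = μ • w → lam1 ≤ μ)
    (hlam1_neg : lam1 < 0) (hg : g ⬝ᵥ v1 ≠ 0)
    (s : Fin n → ℝ) (hs_feas : _root_.enorm s ≤ 1)
    (lam : ℝ) (hlam_nonneg : 0 ≤ lam)
    (hstat : (H + lam • (1 : Matrix (Fin n) (Fin n) ℝ)).mulVec s + g = 0)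
    (hcomp : lam * (1 - _root_.enorm s) = 0)
    (hcorr : (s ⬝ᵥ v1) * (g ⬝ᵥ v1) ≤ 0) :
    ∀ z : Fin n → ℝ, _root_.enorm z ≤ 1 → quadObj H g s ≤ quadObj H g z := by
  have hsymm : ∀ x y : Fin n → ℝ, x ⬝ᵥ H.mulVec y = y ⬝ᵥ H.mulVec x := fun x y => by
    rw [dot_symm_swap H hH, dotProduct_comm]
  have hstat' : g = -(H.mulVec s + lam • s) := by
    have h1 : (H + lam • (1 : Matrix (Fin n) (Fin n) ℝ)).mulVec s
        = H.mulVec s + lam • s := by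
      rw [Matrix.add_mulVec, Matrix.smul_mulVec, Matrix.one_mulVec]
    rw [h1] at hstat
    exact eq_neg_of_add_eq_zero_right hstat
  have hgdot : ∀ x : Fin n → ℝ, g ⬝ᵥ x = -(s ⬝ᵥ H.mulVec x) - lam * (s ⬝ᵥ x) := by
    intro x
    rw [hstat']
    rw [neg_dotProduct, add_dotProduct, smul_dotProduct,
      ← dot_symm_swap H hH s x]
    push_cast [smul_eq_mul]
    ring
  -- lam1 + lam ≥ 0
  have hgv1 : g ⬝ᵥ v1 = -((lam1 + lam) * (s ⬝ᵥ v1)) := by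
    rw [hgdot v1, hv1_eig, dotProduct_smul]
    push_cast [smul_eq_mul]
    ring
  have hsv1 : s ⬝ᵥ v1 ≠ 0 := by
    intro h0
    rw [hgv1, h0] at hg
    simp at hg
  have hll : 0 ≤ lam1 + lam := by
    rw [hgv1] at hcorr
    nlinarith [pow_two_pos_of_ne_zero hsv1, sq_nonneg (s ⬝ᵥ v1)]
  -- PSD of H + lam I
  have hpsd : ∀ w : Fin n → ℝ, 0 ≤ w ⬝ᵥ H.mulVec w + lam * (w ⬝ᵥ w) := by
    intro w
    have h1 := rayleigh_lower H hH lam1 hlam1_min w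
    have h2 : 0 ≤ w ⬝ᵥ w := by rw [← enorm_sq_eq]; positivity
    nlinarith
  intro z hz
  have hcomp' : 0 ≤ lam * (s ⬝ᵥ s - z ⬝ᵥ z) := by
    rcases mul_eq_zero.mp hcomp with h | h
    · rw [h]; simp
    · have hs1 : _root_.enorm s = 1 := by linarith
      have hp : s ⬝ᵥ s = 1 := by rw [← enorm_sq_eq, hs1]; norm_num
      have hq : z ⬝ᵥ z ≤ 1 := by
        rw [← enorm_sq_eq]
        nlinarith [enorm_nonneg' z]
      have := mul_nonneg hlam_nonneg (by linarith : (0:ℝ) ≤ s ⬝ᵥ s - z ⬝ᵥ z)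
      linarith
  have hP := hpsd (z - s)
  have hd1 : (z - s) ⬝ᵥ H.mulVec (z - s)
      = z ⬝ᵥ H.mulVec z - 2 * (s ⬝ᵥ H.mulVec z) + s ⬝ᵥ H.mulVec s := by
    rw [Matrix.mulVec_sub, sub_dotProduct, dotProduct_sub,
      dotProduct_sub, hsymm z s]
    ring
  have hd2 : (z - s) ⬝ᵥ (z - s) = z ⬝ᵥ z - 2 * (s ⬝ᵥ z) + s ⬝ᵥ s := by
    rw [sub_dotProduct, dotProduct_sub, dotProduct_sub,
      dotProduct_comm z s]
    ring
  rw [hd1, hd2] at hP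
  simp only [quadObj]
  rw [hgdot z, hgdot s]
  nlinarith [hP, hcomp']
end

section
/- (Second derivative of f along the sphere) Let x ∈ ℝⁿ with ‖x‖₂ = 1 and let ξ ∈ ℝⁿ with ‖ξ‖₂ = 1 and xᵀξ = 0. Define φ(t) = f((x + tξ)/‖x + tξ‖₂) for t in a neighborhood of 0. Then φ is twice differentiable at 0 and φ''(0) = ξᵀHξ − xᵀHx − gᵀx. -/
open Matrix Filter

/-- All the single-variable calculus needed: for the explicit function
`ψ(t) = (1/2)(1+t²)⁻¹(A+2Bt+Ct²) + (a+bt)/√(1+t²)`, it is differentiable everywhere,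
its derivative is differentiable at `0`, and `ψ''(0) = C - A - a`. -/
lemma aux_calc (A B C a b : ℝ) (ψ : ℝ → ℝ)
    (hψ : ψ = fun t : ℝ => (1/2) * ((1+t^2)⁻¹ * (A + 2*B*t + C*t^2)) + (Real.sqrt (1+t^2))⁻¹ * (a + b*t)) :
    (∀ t : ℝ, DifferentiableAt ℝ ψ t) ∧ DifferentiableAt ℝ (deriv ψ) 0 ∧
      deriv (deriv ψ) 0 = C - A - a := by
  have hpos : ∀ t : ℝ, (0:ℝ) < 1 + t^2 := fun t => by positivity
  have hspos : ∀ t : ℝ, (0:ℝ) < Real.sqrt (1+t^2) := fun t => Real.sqrt_pos.mpr (hpos t)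
  have h1 : ∀ t : ℝ, HasDerivAt (fun u : ℝ => 1 + u^2) (2*t) t := fun t => by
    simpa using (hasDerivAt_pow 2 t).const_add 1
  have hsqrt : ∀ t : ℝ, HasDerivAt (fun u : ℝ => Real.sqrt (1 + u^2)) (t / Real.sqrt (1+t^2)) t := by
    intro t
    have h := (Real.hasDerivAt_sqrt (hpos t).ne').comp t (h1 t)
    refine h.congr_deriv ?_
    field_simp
  have hp : ∀ t : ℝ, HasDerivAt (fun u : ℝ => A + 2*B*u + C*u^2) (2*B + 2*C*t) t := by
    intro t
    have h := (((hasDerivAt_id t).const_mul (2*B)).const_add A).add ((hasDerivAt_pow 2 t).const_mul C)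
    refine h.congr_deriv ?_
    push_cast
    ring
  have hn2 : ∀ t : ℝ, HasDerivAt (fun u : ℝ => 2*B + 2*C*u) (2*C) t := by
    intro t
    have h := ((hasDerivAt_id t).const_mul (2*C)).const_add (2*B)
    refine h.congr_deriv ?_
    ring
  have hab : ∀ t : ℝ, HasDerivAt (fun u : ℝ => a + b*u) b t := by
    intro t
    have h := ((hasDerivAt_id t).const_mul b).const_add a
    refine h.congr_deriv ?_
    ring
  -- first derivative
  set ψ' : ℝ → ℝ := fun t =>
      (1/2) * (-(2*t) / (1+t^2)^2 * (A + 2*B*t + C*t^2) + (1+t^2)⁻¹ * (2*B + 2*C*t)) +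
      (-(t / Real.sqrt (1+t^2)) / Real.sqrt (1+t^2) ^ 2 * (a + b*t) + (Real.sqrt (1+t^2))⁻¹ * b)
    with hψ'def
  have hd1 : ∀ t : ℝ, HasDerivAt ψ (ψ' t) t := by
    intro t
    rw [hψ]
    exact ((((h1 t).inv (hpos t).ne').mul (hp t)).const_mul (1/2)).add
      (((hsqrt t).inv (hspos t).ne').mul (hab t))
  have hderiv_eq : deriv ψ = ψ' := funext fun t => (hd1 t).deriv
  -- second derivative at 0
  have hne0 : Real.sqrt (1+(0:ℝ)^2) ≠ 0 := (hspos 0).ne'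
  have hw1 : HasDerivAt (fun t : ℝ => -(2*t) / (1+t^2)^2)
      (((-(2*1)) * (1+(0:ℝ)^2)^2 - (-(2*(0:ℝ))) * (2*(1+(0:ℝ)^2)^1*(2*0))) / ((1+(0:ℝ)^2)^2)^2) 0 := by
    exact HasDerivAt.div ((hasDerivAt_id (0:ℝ)).const_mul 2).neg
      ((h1 0).pow 2) (by norm_num)
  have hnum : HasDerivAt (fun t : ℝ => -(t / Real.sqrt (1+t^2)))
      (-((1 * Real.sqrt (1+(0:ℝ)^2) - (0:ℝ) * ((0:ℝ) / Real.sqrt (1+(0:ℝ)^2))) / Real.sqrt (1+(0:ℝ)^2) ^ 2)) 0 :=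
    ((hasDerivAt_id (0:ℝ)).div (hsqrt 0) hne0).neg
  have hv1 : HasDerivAt (fun t : ℝ => -(t / Real.sqrt (1+t^2)) / Real.sqrt (1+t^2) ^ 2)
      ((-((1 * Real.sqrt (1+(0:ℝ)^2) - (0:ℝ) * ((0:ℝ) / Real.sqrt (1+(0:ℝ)^2))) / Real.sqrt (1+(0:ℝ)^2) ^ 2) * Real.sqrt (1+(0:ℝ)^2)^2
        - (-((0:ℝ) / Real.sqrt (1+(0:ℝ)^2))) * (2 * Real.sqrt (1+(0:ℝ)^2)^1 * ((0:ℝ)/Real.sqrt (1+(0:ℝ)^2)))) / (Real.sqrt (1+(0:ℝ)^2)^2)^2) 0 :=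
    hnum.div ((hsqrt 0).pow 2) (by positivity)
  have hd2 : HasDerivAt ψ' (C - A - a) 0 := by
    have h := (((hw1.mul (hp 0)).add (((h1 0).inv (hpos 0).ne').mul (hn2 0))).const_mul (1/2)).add
      ((hv1.mul (hab 0)).add (((hsqrt 0).inv hne0).mul_const b))
    refine h.congr_deriv ?_
    have hs1 : Real.sqrt (1+(0:ℝ)^2) = 1 := by norm_num
    rw [hs1]
    norm_num
    ring
  refine ⟨fun t => (hd1 t).differentiableAt, ?_, ?_⟩
  · rw [hderiv_eq]; exact hd2.differentiableAt
  · rw [hderiv_eq]; exact hd2.deriv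

/-- (Second derivative of `f` along the unit sphere.) For unit vectors `x ⊥ ξ`, the map
`φ(t) = f((x + tξ)/‖x + tξ‖₂)` is twice differentiable at `0` with
`φ''(0) = ξᵀHξ − xᵀHx − gᵀx`. -/
theorem second_derivative_along_sphere {n : ℕ}
    (H : Matrix (Fin n) (Fin n) ℝ) (hH : H.IsSymm) (g : Fin n → ℝ)
    (x ξ : Fin n → ℝ) (hx_unit : _root_.enorm x = 1) (hξ_unit : _root_.enorm ξ = 1)
    (hortho : x ⬝ᵥ ξ = 0)
    (φ : ℝ → ℝ)
    (hφ : φ = fun t : ℝ => quadObj H g ((_root_.enorm (x + t • ξ))⁻¹ • (x + t • ξ))) :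
    (∀ᶠ t in nhds (0 : ℝ), DifferentiableAt ℝ φ t) ∧
      DifferentiableAt ℝ (deriv φ) 0 ∧
      deriv (deriv φ) 0 = ξ ⬝ᵥ H.mulVec ξ - x ⬝ᵥ H.mulVec x - g ⬝ᵥ x := by
  have hφψ : φ = fun t : ℝ =>
      (1/2) * ((1+t^2)⁻¹ * ((x ⬝ᵥ H.mulVec x) + 2*(x ⬝ᵥ H.mulVec ξ)*t + (ξ ⬝ᵥ H.mulVec ξ)*t^2)) +
      (Real.sqrt (1+t^2))⁻¹ * ((g ⬝ᵥ x) + (g ⬝ᵥ ξ)*t) := by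
    rw [hφ]
    funext t
    have hpos : (0:ℝ) < 1 + t^2 := by positivity
    have hsum_x : ∑ i, x i ^ 2 = 1 := by
      have h0 : (0:ℝ) ≤ ∑ i, x i ^ 2 := Finset.sum_nonneg fun i _ => sq_nonneg _
      unfold _root_.enorm at hx_unit
      nlinarith [Real.sq_sqrt h0, hx_unit]
    have hsum_ξ : ∑ i, ξ i ^ 2 = 1 := by
      have h0 : (0:ℝ) ≤ ∑ i, ξ i ^ 2 := Finset.sum_nonneg fun i _ => sq_nonneg _
      unfold _root_.enorm at hξ_unit
      nlinarith [Real.sq_sqrt h0, hξ_unit]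
    have hdot : ∑ i, x i * ξ i = 0 := hortho
    have hnorm : _root_.enorm (x + t • ξ) = Real.sqrt (1 + t^2) := by
      unfold _root_.enorm
      congr 1
      calc ∑ i, (x + t • ξ) i ^ 2
          = ∑ i, (x i ^ 2 + (2*t) * (x i * ξ i) + t^2 * ξ i ^ 2) := by
            refine Finset.sum_congr rfl fun i _ => ?_
            simp only [Pi.add_apply, Pi.smul_apply, smul_eq_mul]
            ring
        _ = (∑ i, x i ^ 2) + (2*t) * (∑ i, x i * ξ i) + t^2 * (∑ i, ξ i ^ 2) := by
            simp [Finset.sum_add_distrib, Finset.mul_sum]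
        _ = 1 + t^2 := by rw [hsum_x, hsum_ξ, hdot]; ring
    have hsym : ξ ⬝ᵥ H.mulVec x = x ⬝ᵥ H.mulVec ξ := by
      rw [Matrix.dotProduct_mulVec, ← Matrix.mulVec_transpose, hH.eq, dotProduct_comm]
    have hs2 : Real.sqrt (1+t^2) ^ 2 = 1 + t^2 := Real.sq_sqrt hpos.le
    have hsne : Real.sqrt (1+t^2) ≠ 0 := (Real.sqrt_pos.mpr hpos).ne'
    rw [hnorm]
    unfold quadObj
    simp only [Matrix.mulVec_smul, smul_dotProduct, dotProduct_smul, smul_eq_mul,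
      Matrix.mulVec_add, add_dotProduct, dotProduct_add, Matrix.smul_mulVec]
    rw [hsym]
    field_simp
    linear_combination (-(x ⬝ᵥ H *ᵥ x + 2*t*(x ⬝ᵥ H *ᵥ ξ) + t^2*(ξ ⬝ᵥ H *ᵥ ξ))) * hs2
  obtain ⟨hdiff, hdiff2, hval⟩ :=
    aux_calc (x ⬝ᵥ H.mulVec x) (x ⬝ᵥ H.mulVec ξ) (ξ ⬝ᵥ H.mulVec ξ) (g ⬝ᵥ x) (g ⬝ᵥ ξ) φ hφψ
  exact ⟨Eventually.of_forall hdiff, hdiff2, hval⟩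
end

section
/- (Positive curvature at the global minimizer in the easy case) Assume λ₁ < 0 and gᵀv₁ ≠ 0. Suppose z* ∈ ℝⁿ and λ ≥ 0 satisfy ‖z*‖₂ = 1, (H + λI)z* + g = 0, and H + λI positive semidefinite. Then λ = −z*ᵀHz* − gᵀz*, λ + λ₁ > 0, and for every ξ ∈ ℝⁿ with ‖ξ‖₂ = 1 and ξᵀz* = 0 one has ξᵀHξ − z*ᵀHz* − gᵀz* = λ + ξᵀHξ ≥ λ + λ₁ > 0. -/
open Matrix

lemma l2norm_one_dot {n : ℕ} {x : Fin n → ℝ} (h : l2norm x = 1) : x ⬝ᵥ x = 1 := by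
  have h2 : Real.sqrt (∑ i, x i ^ 2) = 1 := h
  have hnn : (0:ℝ) ≤ ∑ i, x i ^ 2 := Finset.sum_nonneg fun i _ => sq_nonneg _
  have := Real.sqrt_eq_one.mp h2
  simpa [dotProduct, pow_two] using this

lemma symm_dot {n : ℕ} {H : Matrix (Fin n) (Fin n) ℝ} (hH : H.IsSymm)
    (x y : Fin n → ℝ) : x ⬝ᵥ H.mulVec y = H.mulVec x ⬝ᵥ y := by
  rw [Matrix.dotProduct_mulVec, ← Matrix.mulVec_transpose, hH.eq]

/-- Rayleigh lower bound from the minimal-eigenvalue hypothesis. -/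
lemma rayleigh_lb {n : ℕ} {H : Matrix (Fin n) (Fin n) ℝ} (hH : H.IsSymm)
    {lam1 : ℝ}
    (hlam1_min : ∀ (μ : ℝ) (w : Fin n → ℝ), w ≠ 0 → H.mulVec w = μ • w → lam1 ≤ μ)
    (ξ : Fin n → ℝ) : lam1 * (ξ ⬝ᵥ ξ) ≤ ξ ⬝ᵥ H.mulVec ξ := by
  set M : Matrix (Fin n) (Fin n) ℝ := H - lam1 • (1 : Matrix (Fin n) (Fin n) ℝ) with hM
  have hMherm : M.IsHermitian := by
    rw [Matrix.IsHermitian, Matrix.conjTranspose_eq_transpose_of_trivial,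
      Matrix.transpose_sub, Matrix.transpose_smul, Matrix.transpose_one, hH.eq]
  have hpsd : M.PosSemidef := by
    apply hMherm.posSemidef_iff_eigenvalues_nonneg.mpr
    intro i
    have hb := hMherm.mulVec_eigenvectorBasis i
    have hbne : (⇑(hMherm.eigenvectorBasis i) : Fin n → ℝ) ≠ 0 := by
      intro h0
      have := hMherm.eigenvectorBasis.orthonormal.ne_zero i
      apply this
      ext j
      exact congrFun h0 j
    have hHb : H.mulVec (⇑(hMherm.eigenvectorBasis i)) =
        (hMherm.eigenvalues i + lam1) • ⇑(hMherm.eigenvectorBasis i) := by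
      have : M.mulVec (⇑(hMherm.eigenvectorBasis i)) =
          H.mulVec (⇑(hMherm.eigenvectorBasis i)) -
            lam1 • ⇑(hMherm.eigenvectorBasis i) := by
        simp [hM, Matrix.sub_mulVec, Matrix.smul_mulVec]
      rw [this] at hb
      have := sub_eq_iff_eq_add.mp hb
      rw [this]
      ext j
      simp [add_smul]
      ring
    have := hlam1_min _ _ hbne hHb
    simp only [Pi.zero_apply]; linarith
  have h0 := hpsd.dotProduct_mulVec_nonneg ξ
  have hexp : star ξ ⬝ᵥ M.mulVec ξ = ξ ⬝ᵥ H.mulVec ξ - lam1 * (ξ ⬝ᵥ ξ) := by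
    simp [hM, Matrix.sub_mulVec, Matrix.smul_mulVec, dotProduct_sub,
      dotProduct_smul, smul_eq_mul]
  rw [hexp] at h0
  linarith

/-- (Positive curvature at the global minimizer in the easy case.) If `λ₁ < 0`,
`gᵀv₁ ≠ 0`, `‖z*‖₂ = 1`, `(H + λI)z* + g = 0` and `H + λI ⪰ 0` with `λ ≥ 0`, then
`λ = −z*ᵀHz* − gᵀz*`, `λ + λ₁ > 0`, and for every unit `ξ ⊥ z*`,
`ξᵀHξ − z*ᵀHz* − gᵀz* = λ + ξᵀHξ ≥ λ + λ₁ > 0`. -/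
theorem positive_curvature_at_global_min {n : ℕ}
    (H : Matrix (Fin n) (Fin n) ℝ) (hH : H.IsSymm) (g : Fin n → ℝ)
    (lam1 : ℝ) (v1 : Fin n → ℝ)
    (hv1_unit : l2norm v1 = 1) (hv1_eig : H.mulVec v1 = lam1 • v1)
    (hlam1_min : ∀ (μ : ℝ) (w : Fin n → ℝ), w ≠ 0 → H.mulVec w = μ • w → lam1 ≤ μ)
    (hlam1_neg : lam1 < 0) (hg : g ⬝ᵥ v1 ≠ 0)
    (zs : Fin n → ℝ) (lam : ℝ) (hlam_nonneg : 0 ≤ lam)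
    (hzs_sphere : l2norm zs = 1)
    (hstat : (H + lam • (1 : Matrix (Fin n) (Fin n) ℝ)).mulVec zs + g = 0)
    (hpsd : (H + lam • (1 : Matrix (Fin n) (Fin n) ℝ)).PosSemidef) :
    lam = -(zs ⬝ᵥ H.mulVec zs) - g ⬝ᵥ zs ∧
      lam + lam1 > 0 ∧
      ∀ ξ : Fin n → ℝ, l2norm ξ = 1 → ξ ⬝ᵥ zs = 0 →
        ξ ⬝ᵥ H.mulVec ξ - zs ⬝ᵥ H.mulVec zs - g ⬝ᵥ zs = lam + ξ ⬝ᵥ H.mulVec ξ ∧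
        lam + ξ ⬝ᵥ H.mulVec ξ ≥ lam + lam1 ∧
        lam + lam1 > 0 := by
  have hzz : zs ⬝ᵥ zs = 1 := l2norm_one_dot hzs_sphere
  have hvv : v1 ⬝ᵥ v1 = 1 := l2norm_one_dot hv1_unit
  have hAsymm : (H + lam • (1 : Matrix (Fin n) (Fin n) ℝ)).IsSymm := by
    unfold Matrix.IsSymm
    rw [Matrix.transpose_add, Matrix.transpose_smul, Matrix.transpose_one, hH.eq]
  have hstat' : (H + lam • (1 : Matrix (Fin n) (Fin n) ℝ)).mulVec zs = -g :=
    eq_neg_of_add_eq_zero_left hstat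
  have hdotzs : zs ⬝ᵥ H.mulVec zs + lam = -(g ⬝ᵥ zs) := by
    have := congrArg (fun v => zs ⬝ᵥ v) hstat'
    simp only [Matrix.add_mulVec, Matrix.smul_mulVec, Matrix.one_mulVec,
      dotProduct_add, dotProduct_smul, smul_eq_mul,
      dotProduct_neg, dotProduct_comm zs g] at this
    rw [hzz] at this
    linarith
  have part1 : lam = -(zs ⬝ᵥ H.mulVec zs) - g ⬝ᵥ zs := by linarith
  have hge : 0 ≤ lam + lam1 := by
    have h0 := hpsd.dotProduct_mulVec_nonneg v1
    have hexp : star v1 ⬝ᵥ (H + lam • (1 : Matrix (Fin n) (Fin n) ℝ)).mulVec v1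
        = lam1 + lam := by
      simp only [star_trivial, Matrix.add_mulVec, Matrix.smul_mulVec,
        Matrix.one_mulVec, dotProduct_add, dotProduct_smul, smul_eq_mul,
        hv1_eig, hvv]
      ring
    rw [hexp] at h0
    linarith
  have part2 : lam + lam1 > 0 := by
    rcases lt_or_eq_of_le hge with h | h
    · exact h
    · exfalso
      have hAv1 : (H + lam • (1 : Matrix (Fin n) (Fin n) ℝ)).mulVec v1 = 0 := by
        rw [Matrix.add_mulVec, Matrix.smul_mulVec, Matrix.one_mulVec, hv1_eig]
        have hl : lam = -lam1 := by linarith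
        rw [hl]
        ext j
        simp [smul_eq_mul]
      have := congrArg (fun v => v1 ⬝ᵥ v) hstat'
      simp only [dotProduct_neg] at this
      rw [symm_dot hAsymm v1 zs, hAv1] at this
      simp only [zero_dotProduct] at this
      exact hg (by rw [dotProduct_comm g v1]; linarith)
  refine ⟨part1, part2, fun ξ hξ1 hξzs => ?_⟩
  have hξξ : ξ ⬝ᵥ ξ = 1 := l2norm_one_dot hξ1
  have hray := rayleigh_lb hH hlam1_min ξ
  rw [hξξ, mul_one] at hray
  exact ⟨by linarith, by linarith, part2⟩
end

section
/- (Closed-form solution of label propagation) Let S be an n×n real symmetric matrix with nonnegative entries, where n = l + u, let D be the diagonal matrix with D_ii = Σ_k S_ik, and let L = D − S. Partition indices into the first l (labeled) and last u (unlabeled) coordinates, writing S_uu, D_uu, S_ul for the corresponding blocks of S and D. Assume D_uu − S_uu is invertible, and let y_l ∈ ℝˡ. Define ŷ ∈ ℝⁿ by ŷ restricted to the labeled coordinates equal to y_l and ŷ restricted to the unlabeled coordinates equal to (D_uu − S_uu)⁻¹ S_ul y_l. Then ŷ minimizes the energy wᵀLw = (1/2)·Σ_{i,j} S_ij (w_i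 − w_j)² over all w ∈ ℝⁿ whose first l coordinates equal y_l; i.e. ŷᵀLŷ ≤ wᵀLw for every such w. -/
open Matrix

lemma lap_psd {n : Type*} [Fintype n] [DecidableEq n]
    (S : Matrix n n ℝ) (hS : S.IsSymm) (hnn : ∀ i j, 0 ≤ S i j) (d : n → ℝ) :
    0 ≤ d ⬝ᵥ (Matrix.diagonal (fun i => ∑ k, S i k) - S).mulVec d := by
  have hsymm : ∀ i j, S j i = S i j := fun i j => by
    conv_lhs => rw [← hS]
    rfl
  have hE : d ⬝ᵥ (Matrix.diagonal (fun i => ∑ k, S i k) - S).mulVec d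
      = ∑ i, ∑ j, S i j * (d i * (d i - d j)) := by
    simp only [dotProduct, mulVec, Matrix.sub_apply, diagonal_apply, dotProduct,
      Finset.mul_sum, Finset.sum_mul]
    refine Finset.sum_congr rfl fun i _ => ?_
    have : ∀ j, d i * (((if i = j then ∑ k, S i k else 0) - S i j) * d j)
        = (if i = j then (∑ k, S i k) * d i * d j else 0) - S i j * d i * d j := by
      intro j; split <;> ring
    simp only [this, Finset.sum_sub_distrib, Finset.sum_ite_eq Finset.univ i,
      Finset.mem_univ, if_true, Finset.sum_mul, Finset.mul_sum]
    rw [← Finset.sum_sub_distrib]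
    refine Finset.sum_congr rfl fun j _ => ?_
    ring
  have h2 : ∑ i, ∑ j, S i j * (d i - d j)^2
      = 2 * ∑ i, ∑ j, S i j * (d i * (d i - d j)) := by
    have hswap : ∑ i, ∑ j, S i j * (d j * (d j - d i))
        = ∑ i, ∑ j, S i j * (d i * (d i - d j)) := by
      rw [Finset.sum_comm]
      refine Finset.sum_congr rfl fun j _ => Finset.sum_congr rfl fun i _ => ?_
      rw [hsymm]
    calc ∑ i, ∑ j, S i j * (d i - d j)^2
        = ∑ i, ∑ j, (S i j * (d i * (d i - d j)) + S i j * (d j * (d j - d i))) := by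
          refine Finset.sum_congr rfl fun i _ => Finset.sum_congr rfl fun j _ => ?_
          ring
      _ = _ := by
          simp only [Finset.sum_add_distrib, hswap]; ring
  have hpos : 0 ≤ ∑ i, ∑ j, S i j * (d i - d j)^2 :=
    Finset.sum_nonneg fun i _ => Finset.sum_nonneg fun j _ =>
      mul_nonneg (hnn i j) (sq_nonneg _)
  rw [hE]; linarith

/-- (Closed-form solution of label propagation.) Let `S` be a symmetric nonnegative
similarity matrix on `l` labeled plus `u` unlabeled nodes, `D` its degree matrix and
`L = D − S` the graph Laplacian. If `D_uu − S_uu` is invertible, then the vector `ŷ`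
agreeing with `y_l` on labeled nodes and equal to `(D_uu − S_uu)⁻¹ S_ul y_l` on
unlabeled nodes minimizes the energy `wᵀLw` over all `w` agreeing with `y_l` on the
labeled nodes. -/
theorem label_propagation_closed_form {l u : ℕ}
    (S : Matrix (Fin l ⊕ Fin u) (Fin l ⊕ Fin u) ℝ)
    (hSsymm : S.IsSymm) (hSnonneg : ∀ i j, 0 ≤ S i j)
    (D : Matrix (Fin l ⊕ Fin u) (Fin l ⊕ Fin u) ℝ)
    (hD : D = Matrix.diagonal (fun i => ∑ k, S i k))
    (L : Matrix (Fin l ⊕ Fin u) (Fin l ⊕ Fin u) ℝ) (hL : L = D - S)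
    (yl : Fin l → ℝ)
    (hinv : IsUnit (D.submatrix Sum.inr Sum.inr - S.submatrix Sum.inr Sum.inr).det)
    (yhat : Fin l ⊕ Fin u → ℝ)
    (hyhat : yhat = Sum.elim yl
      ((D.submatrix Sum.inr Sum.inr - S.submatrix Sum.inr Sum.inr)⁻¹.mulVec
        ((S.submatrix Sum.inr Sum.inl).mulVec yl))) :
    ∀ w : Fin l ⊕ Fin u → ℝ, (∀ i, w (Sum.inl i) = yl i) →
      yhat ⬝ᵥ L.mulVec yhat ≤ w ⬝ᵥ L.mulVec w := by
  intro w hw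
  set A := D.submatrix Sum.inr Sum.inr - S.submatrix Sum.inr Sum.inr with hA
  set v := A⁻¹.mulVec ((S.submatrix Sum.inr Sum.inl).mulVec yl) with hv
  have hLsymm : L.IsSymm := by
    rw [hL, hD]
    exact (Matrix.isSymm_diagonal _).sub hSsymm
  -- d := w - yhat vanishes on labeled coordinates
  set d : Fin l ⊕ Fin u → ℝ := fun i => w i - yhat i with hd
  have hdl : ∀ i, d (Sum.inl i) = 0 := by
    intro i; simp [hd, hw i, hyhat]
  -- L yhat vanishes on unlabeled coordinates
  have hLy : ∀ j, L.mulVec yhat (Sum.inr j) = 0 := by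
    intro j
    have hAv : A.mulVec v = (S.submatrix Sum.inr Sum.inl).mulVec yl := by
      rw [hv, Matrix.mulVec_mulVec, Matrix.mul_nonsing_inv _ hinv, Matrix.one_mulVec]
    have Dli0 : ∀ i : Fin l, D (Sum.inr j) (Sum.inl i) = 0 := by
      intro i; simp [hD, Matrix.diagonal_apply]
    have : L.mulVec yhat (Sum.inr j)
        = A.mulVec v j - (S.submatrix Sum.inr Sum.inl).mulVec yl j := by
      simp only [mulVec, dotProduct, Fintype.sum_sum_type, hyhat, Sum.elim_inl,
        Sum.elim_inr, hL, hA, Matrix.sub_apply, submatrix_apply, Dli0, zero_sub, neg_mul]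
      rw [Finset.sum_neg_distrib]
      ring
    rw [this, hAv, sub_self]
  have hdLy : d ⬝ᵥ L.mulVec yhat = 0 := by
    rw [dotProduct]
    rw [Fintype.sum_sum_type]
    simp [hdl, hLy]
  have hyLd : yhat ⬝ᵥ L.mulVec d = 0 := by
    rw [Matrix.dotProduct_mulVec, ← Matrix.mulVec_transpose, hLsymm.eq,
      dotProduct_comm, hdLy]
  have hpsd : 0 ≤ d ⬝ᵥ L.mulVec d := by
    rw [hL, hD]; exact lap_psd S hSsymm hSnonneg d
  have hweq : w = fun i => yhat i + d i := by
    funext i; simp [hd]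
  have hexp : w ⬝ᵥ L.mulVec w
      = yhat ⬝ᵥ L.mulVec yhat + yhat ⬝ᵥ L.mulVec d + d ⬝ᵥ L.mulVec yhat
        + d ⬝ᵥ L.mulVec d := by
    rw [hweq]
    have : (fun i => yhat i + d i) = yhat + d := rfl
    rw [this, Matrix.mulVec_add, dotProduct_add, add_dotProduct, add_dotProduct]
    ring
  rw [hexp, hdLy, hyLd]
  linarith
end
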